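/- Let X be a CAT(0) cube complex with at least one hyperplane and no infinite family of pairwise-crossing hyperplanes. Then X is combinatorially geodesically complete if and only if every combinatorial geodesic segment and every combinatorial geodesic ray in X is contained in a bi-infinite combinatorial geodesic. -/

import Mathlib

/-!
Combinatorial model of a CAT(0) cube complex via Sageev duality.

`V` is the set of 0-cubes, `H` the set of hyperplanes, and `side h x : Bool`
records which halfspace of the hyperplane `h` contains the 0-cube `x`.
The axioms say exactly that `V` is the set of consistent orientations of the
hyperplanes, each differing from a fixed one on finitely many hyperplanes;
this is precisely the combinatorial data of (the 0-skeleton of) a CAT(0) cube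
complex, together with its hyperplane structure.
-/
structure CCC where
  V : Type
  H : Type
  side : H → V → Bool
  nonempty_V : Nonempty V
  vertex_ext : ∀ x y : V, (∀ h, side h x = side h y) → x = y
  sep_finite : ∀ x y : V, {h : H | side h x ≠ side h y}.Finite
  halfspace_nonempty : ∀ h b, ∃ x, side h x = b
  hyp_inj : ∀ h h' : H, (∀ x, side h x = side h' x) → h = h'
  hyp_inj' : ∀ h h' : H, (∀ x, side h x = !(side h' x)) → h = h'
  realize : ∀ (o : H → Bool) (x : V),
    (∀ h h', ∃ y, side h y = o h ∧ side h' y = o h') →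
    {h : H | o h ≠ side h x}.Finite →
    ∃ y, ∀ h, side h y = o h

namespace CCC

variable (X : CCC)

/-- The combinatorial (1-skeleton) distance between 0-cubes: the number of
separating hyperplanes. -/
noncomputable def dist (x y : X.V) : ℕ := (X.sep_finite x y).toFinset.card

/-- Two 0-cubes are adjacent (joined by a 1-cube) iff exactly one hyperplane
separates them. -/
def Adj (x y : X.V) : Prop :=
  ∃ h, X.side h x ≠ X.side h y ∧ ∀ h', X.side h' x ≠ X.side h' y → h' = h

/-- Two hyperplanes cross iff all four quarter-spaces are nonempty. -/
def Crosses (h h' : X.H) : Prop :=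
  ∀ b b' : Bool, ∃ x, X.side h x = b ∧ X.side h' x = b'

/-- The hyperplane `h'` lies in the halfspace `b` of the hyperplane `h`. -/
def InHalf (h' h : X.H) (b : Bool) : Prop :=
  h' ≠ h ∧ ∃ c : Bool, ∀ x, X.side h x = !b → X.side h' x = c

/-- `h` separates the hyperplanes `h₁` and `h₂`. -/
def SepH (h h₁ h₂ : X.H) : Prop :=
  ∃ b : Bool, X.InHalf h₁ h b ∧ X.InHalf h₂ h (!b)

/-- Two distinct hyperplanes contact iff no third hyperplane separates them. -/
def Contact (h h' : X.H) : Prop := h ≠ h' ∧ ¬ ∃ h'', X.SepH h'' h h'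

/-- A facing triple: three distinct hyperplanes, each having a halfspace
containing the other two. -/
def FacingTriple (h₁ h₂ h₃ : X.H) : Prop :=
  h₁ ≠ h₂ ∧ h₁ ≠ h₃ ∧ h₂ ≠ h₃ ∧
  ∃ b₁ b₂ b₃ : Bool,
    X.InHalf h₂ h₁ b₁ ∧ X.InHalf h₃ h₁ b₁ ∧
    X.InHalf h₁ h₂ b₂ ∧ X.InHalf h₃ h₂ b₂ ∧
    X.InHalf h₁ h₃ b₃ ∧ X.InHalf h₂ h₃ b₃

/-- A set of hyperplanes is inseparable if every hyperplane separating two of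
its members belongs to it. -/
def Inseparable (U : Set X.H) : Prop :=
  ∀ u ∈ U, ∀ u' ∈ U, ∀ h, X.SepH h u u' → h ∈ U

/-- A set of hyperplanes is unidirectional if each member has a halfspace
containing only finitely many members. -/
def Unidirectional (U : Set X.H) : Prop :=
  ∀ u ∈ U, ∃ b : Bool, {h | h ∈ U ∧ X.InHalf h u b}.Finite

def NoFacingTriple (U : Set X.H) : Prop :=
  ∀ h₁ ∈ U, ∀ h₂ ∈ U, ∀ h₃ ∈ U, ¬ X.FacingTriple h₁ h₂ h₃

/-- A unidirectional boundary set (UBS). -/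
def IsUBS (U : Set X.H) : Prop :=
  U.Infinite ∧ X.Inseparable U ∧ X.Unidirectional U ∧ X.NoFacingTriple U

/-- Almost-equivalence: finite symmetric difference. -/
def AlmostEq (U U' : Set X.H) : Prop := (symmDiff U U').Finite

/-- A minimal UBS. -/
def MinUBS (U : Set X.H) : Prop :=
  X.IsUBS U ∧ ∀ U' ⊆ U, X.IsUBS U' → X.AlmostEq U U'

/-- The simplex (= almost-equivalence class of UBSs) represented by `U` is a
face of the simplex represented by `V`. -/
def FaceOf (U V : Set X.H) : Prop :=
  ∃ U' V', X.IsUBS U' ∧ X.IsUBS V' ∧ X.AlmostEq U U' ∧ X.AlmostEq V V' ∧ U' ⊆ V'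

/-- `U` decomposes, up to almost-equivalence, into `k` pairwise disjoint
minimal UBSs; i.e. the class of `U` is a `(k-1)`-simplex of `∂X`. -/
def HasDim (U : Set X.H) (k : ℕ) : Prop :=
  ∃ 𝒰 : Fin k → Set X.H, (∀ i, X.MinUBS (𝒰 i)) ∧
    (∀ i j, i ≠ j → Disjoint (𝒰 i) (𝒰 j)) ∧ X.AlmostEq U (⋃ i, 𝒰 i)

/-- No infinite family of pairwise-crossing hyperplanes. -/
def NoInfiniteCrossing : Prop :=
  ∀ S : Set X.H, (∀ h ∈ S, ∀ h' ∈ S, h ≠ h' → X.Crosses h h') → S.Finite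

def LocallyFinite : Prop := ∀ x : X.V, {y | X.Adj x y}.Finite

/-- A combinatorial geodesic ray (parameterized by its vertices). -/
def IsGeodesicRay (γ : ℕ → X.V) : Prop :=
  ∀ m n : ℕ, m ≤ n → X.dist (γ m) (γ n) = n - m

/-- A bi-infinite combinatorial geodesic. -/
def IsGeodesicLine (α : ℤ → X.V) : Prop :=
  ∀ m n : ℤ, m ≤ n → (X.dist (α m) (α n) : ℤ) = n - m

/-- A combinatorial geodesic segment of length `n`. -/
def IsGeodSeg (c : ℕ → X.V) (n : ℕ) : Prop :=
  ∀ i j : ℕ, i ≤ j → j ≤ n → X.dist (c i) (c j) = j - i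

/-- The set of hyperplanes crossing (dual to the 1-cubes of) the path `γ`. -/
def WSet (γ : ℕ → X.V) : Set X.H :=
  {h | ∃ n : ℕ, X.side h (γ n) ≠ X.side h (γ (n+1))}

/-- The 0-cubes of the carrier `N(h)` of the hyperplane `h`. -/
def carrier (h : X.H) : Set X.V :=
  {x | ∃ y, X.Adj x y ∧ X.side h x ≠ X.side h y}

/-- An essential hyperplane: each halfspace contains 0-cubes arbitrarily far
from the carrier. -/
def EssentialHyp (h : X.H) : Prop :=
  ∀ b : Bool, ∀ n : ℕ, ∃ x, X.side h x = b ∧ ∀ y ∈ X.carrier h, n ≤ X.dist x y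

/-- Combinatorial convexity of a set of 0-cubes (the 0-skeleton of a convex
subcomplex). -/
def IsConvexSet (S : Set X.V) : Prop :=
  ∀ x ∈ S, ∀ y ∈ S, ∀ z, X.dist x z + X.dist z y = X.dist x y → z ∈ S

/-- `x` and `y` are joined by a combinatorial path avoiding `S`. -/
def ReachAvoid (S : Set X.V) (x y : X.V) : Prop :=
  ∃ (n : ℕ) (c : ℕ → X.V), c 0 = x ∧ c n = y ∧
    (∀ i < n, X.Adj (c i) (c (i+1))) ∧ ∀ i ≤ n, c i ∉ S

/-- No compact (finite) convex subcomplex disconnects `X`. -/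
def CompactlyIndecomposable : Prop :=
  ∀ K : Set X.V, K.Finite → X.IsConvexSet K →
    ∀ x y : X.V, x ∉ K → y ∉ K → X.ReachAvoid K x y

/-- `γ` bounds an eighth-flat: some eighth-flat (the subcomplex of the standard
tiling of `[0,∞)²` below the graph of an unbounded nondecreasing function)
embeds isometrically and cubically in `X` with image containing `γ`. -/
def BoundsEighthFlat (γ : ℕ → X.V) : Prop :=
  ∃ g : ℕ → ℕ, Monotone g ∧ (∀ N : ℕ, ∃ m, N ≤ g m) ∧
    ∃ e : {p : ℕ × ℕ // p.2 ≤ g p.1} → X.V,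
      (∀ p q, X.dist (e p) (e q) = Nat.dist p.1.1 q.1.1 + Nat.dist p.1.2 q.1.2) ∧
      ∀ n : ℕ, ∃ p, e p = γ n

/-- An edge-chain in the contact graph. -/
def CChain (c : ℕ → X.H) (n : ℕ) : Prop := ∀ i < n, X.Contact (c i) (c (i+1))

/-- Distance in the contact graph `C(X)` (`⊤` if there is no path). -/
noncomputable def cdist (h h' : X.H) : ℕ∞ :=
  sInf {e : ℕ∞ | ∃ (n : ℕ) (c : ℕ → X.H), c 0 = h ∧ c n = h' ∧ X.CChain c n ∧ e = n}

/-- An edge-chain in the crossing graph. -/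
def XChain (c : ℕ → X.H) (n : ℕ) : Prop := ∀ i < n, X.Crosses (c i) (c (i+1))

/-- Distance in the crossing graph `Δ(X)`. -/
noncomputable def xdist (h h' : X.H) : ℕ∞ :=
  sInf {e : ℕ∞ | ∃ (n : ℕ) (c : ℕ → X.H), c 0 = h ∧ c n = h' ∧ X.XChain c n ∧ e = n}

/-- Distance in the full subgraph `Λ(γ)` of the contact graph spanned by the
hyperplanes crossing `γ`. -/
noncomputable def ldist (γ : ℕ → X.V) (h h' : X.H) : ℕ∞ :=
  sInf {e : ℕ∞ | ∃ (n : ℕ) (c : ℕ → X.H), c 0 = h ∧ c n = h' ∧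
    (∀ i ≤ n, c i ∈ X.WSet γ) ∧ X.CChain c n ∧ e = n}

/-- Two 0-simplices of `∂X` (represented by minimal UBSs) are adjacent in the
1-skeleton of `∂X`. -/
def BAdj (U V : Set X.H) : Prop :=
  X.MinUBS U ∧ X.MinUBS V ∧ ¬ X.AlmostEq U V ∧
    ∃ W, X.IsUBS W ∧ X.FaceOf U W ∧ X.FaceOf V W

/-- Distance in the 1-skeleton of the simplicial boundary `∂X`, between the
0-simplices represented by the minimal UBSs `U` and `V`. -/
noncomputable def bdist (U V : Set X.H) : ℕ∞ :=
  sInf {e : ℕ∞ | ∃ (n : ℕ) (c : ℕ → Set X.H),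
    X.AlmostEq (c 0) U ∧ X.AlmostEq (c n) V ∧ (∀ i ≤ n, X.MinUBS (c i)) ∧
    (∀ i < n, X.BAdj (c i) (c (i+1)) ∨ X.AlmostEq (c i) (c (i+1))) ∧ e = n}

/-- Diameter of the contact graph. -/
noncomputable def cdiam : ℕ∞ := ⨆ (h : X.H) (h' : X.H), X.cdist h h'

/-- Diameter of the crossing graph. -/
noncomputable def xdiam : ℕ∞ := ⨆ (h : X.H) (h' : X.H), X.xdist h h'

/-- Diameter of the 1-skeleton of the simplicial boundary. -/
noncomputable def bdiam : ℕ∞ :=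
  ⨆ (U : Set X.H) (V : Set X.H) (_ : X.MinUBS U) (_ : X.MinUBS V), X.bdist U V

/-- A consistent orientation of the hyperplanes: any two chosen halfspaces
intersect. -/
def Consistent (χ : X.H → Bool) : Prop :=
  ∀ h h', ∃ x, X.side h x = χ h ∧ X.side h' x = χ h'

/-- The halfspace `b` of `h`, as a set of 0-cubes. -/
def Hs (h : X.H) (b : Bool) : Set X.V := {x | X.side h x = b}

/-- Every simplex of `∂X` is visible, i.e. represented by the set of
hyperplanes crossing some combinatorial geodesic ray. -/
def FullyVisible : Prop :=
  ∀ V, X.IsUBS V → ∃ γ : ℕ → X.V, X.IsGeodesicRay γ ∧ X.AlmostEq (X.WSet γ) V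

/-- The halfspace `b` of `h` is shallow: it lies within uniformly bounded
distance of the carrier of `h`. -/
def ShallowHalf (h : X.H) (b : Bool) : Prop :=
  ∃ R : ℕ, ∀ x, X.side h x = b → ∃ y ∈ X.carrier h, X.dist x y ≤ R

/-- An `r`-avoiding combinatorial path (with respect to the basepoint `x₀`)
of length `n` from `a` to `b`. -/
def AvoidPathLen (x₀ : X.V) (r : ℕ) (a b : X.V) (n : ℕ) : Prop :=
  ∃ c : ℕ → X.V, c 0 = a ∧ c n = b ∧
    (∀ i < n, X.Adj (c i) (c (i+1))) ∧ ∀ i ≤ n, r ≤ X.dist (c i) x₀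

/-- Combinatorial geodesic completeness: for every (finite) maximal family of
pairwise-crossing hyperplanes and every choice of halfspaces, the intersection
of the chosen halfspaces contains 0-cubes arbitrarily far from the
intersection of the carriers. -/
def CombGeodComplete : Prop :=
  ∀ (n : ℕ) (W : Fin n → X.H), Function.Injective W →
    (∀ i j, i ≠ j → X.Crosses (W i) (W j)) →
    (∀ h, ¬ ∀ i, X.Crosses h (W i)) →
    ∀ χ : Fin n → Bool, ∀ R : ℕ,
      ∃ x, (∀ i, X.side (W i) x = χ i) ∧
        ∀ y, (∀ i, y ∈ X.carrier (W i)) → R ≤ X.dist x y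

/-- `X` decomposes as a product of two unbounded convex subcomplexes:
equivalently, the hyperplanes split into two parts, each member of one part
crossing each member of the other, both factors being unbounded. -/
def ProductDecomp : Prop :=
  ∃ H₁ H₂ : Set X.H, Disjoint H₁ H₂ ∧ H₁ ∪ H₂ = Set.univ ∧
    (∀ h₁ ∈ H₁, ∀ h₂ ∈ H₂, X.Crosses h₁ h₂) ∧
    (∀ n : ℕ, ∃ x y : X.V, n ≤ ({h | X.side h x ≠ X.side h y} ∩ H₁).ncard) ∧
    (∀ n : ℕ, ∃ x y : X.V, n ≤ ({h | X.side h x ≠ X.side h y} ∩ H₂).ncard)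

/-- `∂X` decomposes as the simplicial join of two disjoint nonempty
subcomplexes: the 0-simplices split into two nonempty parts, any 0-simplex of
one part spanning a 1-simplex with any 0-simplex of the other. -/
def JoinDecomp : Prop :=
  ∃ 𝒜₁ 𝒜₂ : Set (Set X.H),
    (∀ U ∈ 𝒜₁, X.MinUBS U) ∧ (∀ U ∈ 𝒜₂, X.MinUBS U) ∧
    𝒜₁.Nonempty ∧ 𝒜₂.Nonempty ∧
    (∀ U U', U ∈ 𝒜₁ → X.MinUBS U' → X.AlmostEq U U' → U' ∈ 𝒜₁) ∧
    (∀ U U', U ∈ 𝒜₂ → X.MinUBS U' → X.AlmostEq U U' → U' ∈ 𝒜₂) ∧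
    (∀ U, X.MinUBS U → U ∈ 𝒜₁ ∨ U ∈ 𝒜₂) ∧
    (∀ U ∈ 𝒜₁, ∀ V ∈ 𝒜₂, ¬ X.AlmostEq U V) ∧
    (∀ U ∈ 𝒜₁, ∀ V ∈ 𝒜₂, ∃ W, X.IsUBS W ∧ X.FaceOf U W ∧ X.FaceOf V W)

/-! Relative versions of the hyperplane notions, for a (convex) subcomplex
with 0-cube set `S`; the hyperplanes of the subcomplex are the hyperplanes of
`X` crossing it. -/

/-- `h` crosses the subcomplex with 0-cubes `S`. -/
def CrossesSet (S : Set X.V) (h : X.H) : Prop :=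
  ∃ x ∈ S, ∃ y ∈ S, X.side h x ≠ X.side h y

def InHalfOn (S : Set X.V) (h' h : X.H) (b : Bool) : Prop :=
  h' ≠ h ∧ ∃ c : Bool, ∀ x ∈ S, X.side h x = !b → X.side h' x = c

def SepHOn (S : Set X.V) (h h₁ h₂ : X.H) : Prop :=
  X.CrossesSet S h ∧ ∃ b : Bool, X.InHalfOn S h₁ h b ∧ X.InHalfOn S h₂ h (!b)

def InseparableOn (S : Set X.V) (U : Set X.H) : Prop :=
  ∀ u ∈ U, ∀ u' ∈ U, ∀ h, X.SepHOn S h u u' → h ∈ U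

def UnidirectionalOn (S : Set X.V) (U : Set X.H) : Prop :=
  ∀ u ∈ U, ∃ b : Bool, {h | h ∈ U ∧ X.InHalfOn S h u b}.Finite

def NoFacingTripleOn (S : Set X.V) (U : Set X.H) : Prop :=
  ∀ h₁ ∈ U, ∀ h₂ ∈ U, ∀ h₃ ∈ U, ¬ (h₁ ≠ h₂ ∧ h₁ ≠ h₃ ∧ h₂ ≠ h₃ ∧
    ∃ b₁ b₂ b₃ : Bool,
      X.InHalfOn S h₂ h₁ b₁ ∧ X.InHalfOn S h₃ h₁ b₁ ∧
      X.InHalfOn S h₁ h₂ b₂ ∧ X.InHalfOn S h₃ h₂ b₂ ∧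
      X.InHalfOn S h₁ h₃ b₃ ∧ X.InHalfOn S h₂ h₃ b₃)

/-- A UBS of the subcomplex with 0-cube set `S`. -/
def IsUBSOn (S : Set X.V) (U : Set X.H) : Prop :=
  (∀ h ∈ U, X.CrossesSet S h) ∧ U.Infinite ∧ X.InseparableOn S U ∧
    X.UnidirectionalOn S U ∧ X.NoFacingTripleOn S U

def MinUBSOn (S : Set X.V) (U : Set X.H) : Prop :=
  X.IsUBSOn S U ∧ ∀ U' ⊆ U, X.IsUBSOn S U' → X.AlmostEq U U'

def FaceOfOn (S : Set X.V) (U V : Set X.H) : Prop :=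
  ∃ U' V', X.IsUBSOn S U' ∧ X.IsUBSOn S V' ∧ X.AlmostEq U U' ∧ X.AlmostEq V V' ∧ U' ⊆ V'

def HasDimOn (S : Set X.V) (U : Set X.H) (k : ℕ) : Prop :=
  ∃ 𝒰 : Fin k → Set X.H, (∀ i, X.MinUBSOn S (𝒰 i)) ∧
    (∀ i j, i ≠ j → Disjoint (𝒰 i) (𝒰 j)) ∧ X.AlmostEq U (⋃ i, 𝒰 i)

end CCC
namespace CCC

attribute [local instance 10] Classical.propDecidable

variable (X : CCC)

/-- The set of hyperplanes separating two 0-cubes, as a `Finset`. -/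
noncomputable def sepF (x y : X.V) : Finset X.H := (X.sep_finite x y).toFinset

variable {X}

lemma mem_sepF {x y : X.V} {h : X.H} : h ∈ X.sepF x y ↔ X.side h x ≠ X.side h y := by
  simp [sepF]

lemma sepF_comm (x y : X.V) : X.sepF x y = X.sepF y x := by
  ext h; simp [mem_sepF, ne_comm]

lemma dist_eq_card (x y : X.V) : X.dist x y = (X.sepF x y).card := rfl

lemma dist_comm (x y : X.V) : X.dist x y = X.dist y x := by
  rw [dist_eq_card, dist_eq_card, sepF_comm]

lemma sepF_triple (x y z : X.V) : X.sepF x z ⊆ X.sepF x y ∪ X.sepF y z := by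
  intro h hh
  rw [mem_sepF] at hh
  rw [Finset.mem_union, mem_sepF, mem_sepF]
  by_contra hc
  push_neg at hc
  exact hh (hc.1.trans hc.2)

lemma dist_triangle (x y z : X.V) : X.dist x z ≤ X.dist x y + X.dist y z := by
  rw [dist_eq_card, dist_eq_card, dist_eq_card]
  exact le_trans (Finset.card_le_card (sepF_triple x y z)) (Finset.card_union_le _ _)

lemma eq_of_sepF_eq_empty {x y : X.V} (h : X.sepF x y = ∅) : x = y := by
  apply X.vertex_ext
  intro hh
  by_contra hc
  have : hh ∈ X.sepF x y := mem_sepF.2 hc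
  simp [h] at this

lemma dist_eq_zero_iff {x y : X.V} : X.dist x y = 0 ↔ x = y := by
  constructor
  · intro h
    exact eq_of_sepF_eq_empty (Finset.card_eq_zero.mp h)
  · rintro rfl
    rw [dist_eq_card, Finset.card_eq_zero]
    apply Finset.eq_empty_of_forall_notMem
    intro h hm
    exact (mem_sepF.1 hm) rfl

/-- Additivity of distance gives disjoint decomposition of separators. -/
lemma sepF_add {x y z : X.V} (h : X.dist x y + X.dist y z = X.dist x z) :
    Disjoint (X.sepF x y) (X.sepF y z) ∧ X.sepF x y ∪ X.sepF y z = X.sepF x z := by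
  have hsub : X.sepF x z ⊆ X.sepF x y ∪ X.sepF y z := sepF_triple x y z
  rw [dist_eq_card, dist_eq_card, dist_eq_card] at h
  have hle : (X.sepF x y ∪ X.sepF y z).card ≤ (X.sepF x z).card := by
    rw [← h]
    exact Finset.card_union_le _ _
  have heq : X.sepF x y ∪ X.sepF y z = X.sepF x z :=
    Finset.eq_of_subset_of_card_le hsub hle |>.symm
  refine ⟨?_, heq⟩
  rw [Finset.disjoint_iff_inter_eq_empty, ← Finset.card_eq_zero]
  have hcu := Finset.card_union_add_card_inter (X.sepF x y) (X.sepF y z)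
  rw [heq] at hcu
  omega

lemma sepF_left_subset {x y z : X.V} (h : X.dist x y + X.dist y z = X.dist x z) :
    X.sepF x y ⊆ X.sepF x z := (sepF_add h).2 ▸ Finset.subset_union_left

lemma sepF_right_subset {x y z : X.V} (h : X.dist x y + X.dist y z = X.dist x z) :
    X.sepF y z ⊆ X.sepF x z := (sepF_add h).2 ▸ Finset.subset_union_right

/-- Two hyperplanes inducing the same partition (up to relabelling) coincide. -/
lemma eq_of_halfspace_eq {h h' : X.H} {a b : Bool}
    (hiff : ∀ z, X.side h z = a ↔ X.side h' z = b) : h = h' := by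
  cases a <;> cases b
  · exact X.hyp_inj h h' (fun z => by have := hiff z; revert this; cases hz : X.side h z <;> cases hz' : X.side h' z <;> simp)
  · exact X.hyp_inj' h h' (fun z => by have := hiff z; revert this; cases hz : X.side h z <;> cases hz' : X.side h' z <;> simp)
  · exact X.hyp_inj' h h' (fun z => by have := hiff z; revert this; cases hz : X.side h z <;> cases hz' : X.side h' z <;> simp)
  · exact X.hyp_inj h h' (fun z => by have := hiff z; revert this; cases hz : X.side h z <;> cases hz' : X.side h' z <;> simp)

end CCC
namespace CCC

attribute [local instance 10] Classical.propDecidable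

variable {X : CCC}

lemma eq_of_two_incl {k h' : X.H} {β c : Bool}
    (i1 : ∀ z, X.side k z = β → X.side h' z = c)
    (i2 : ∀ z, X.side k z = !β → X.side h' z = !c) : h' = k := by
  refine (eq_of_halfspace_eq (a := β) (b := c) (fun z => ⟨i1 z, ?_⟩)).symm
  intro hz
  by_contra hk
  have := i2 z (Bool.eq_not_iff.mpr hk)
  rw [hz] at this
  exact absurd this (by cases c <;> simp)

section Corner

variable (X : CCC) {n : ℕ} (W : Fin n → X.H)

lemma exists_cubeside (hmax : ∀ h, ¬ ∀ i, X.Crosses h (W i)) (h : X.H) :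
    ∃ (i : Fin n) (b β : Bool), ∀ x, X.side (W i) x = β → X.side h x = b := by
  have hm := hmax h
  push_neg at hm
  obtain ⟨i, hi⟩ := hm
  rw [Crosses] at hi; push_neg at hi
  obtain ⟨b, β, hb⟩ := hi
  refine ⟨i, !b, β, fun x hx => ?_⟩
  have := hb x
  cases hsx : X.side h x <;> cases b <;> simp_all

variable (hmax : ∀ h, ¬ ∀ i, X.Crosses h (W i))

/-- Index of a member of the maximal family not crossed by `h`. -/
noncomputable def cIdx (h : X.H) : Fin n := (X.exists_cubeside W hmax h).choose

/-- The "cube side" of `h` relative to the maximal family. -/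
noncomputable def cB (h : X.H) : Bool :=
  (X.exists_cubeside W hmax h).choose_spec.choose

noncomputable def cBeta (h : X.H) : Bool :=
  (X.exists_cubeside W hmax h).choose_spec.choose_spec.choose

lemma cSpec (h : X.H) :
    ∀ x, X.side (W (X.cIdx W hmax h)) x = X.cBeta W hmax h → X.side h x = X.cB W hmax h :=
  (X.exists_cubeside W hmax h).choose_spec.choose_spec.choose_spec

/-- The orientation of all hyperplanes determined by a corner of the maximal cube. -/
noncomputable def corient (χ : Fin n → Bool) (h : X.H) : Bool :=
  if hh : ∃ i, W i = h then χ hh.choose else X.cB W hmax h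

lemma corient_W (hinj : Function.Injective W) (χ : Fin n → Bool) (i : Fin n) :
    X.corient W hmax χ (W i) = χ i := by
  have hex : ∃ j, W j = W i := ⟨i, rfl⟩
  rw [corient, dif_pos hex]
  congr 1
  exact hinj hex.choose_spec

lemma corient_not (χ : Fin n → Bool) {h : X.H} (hh : h ∉ Set.range W) :
    X.corient W hmax χ h = X.cB W hmax h := by
  rw [corient, dif_neg]
  rintro ⟨i, rfl⟩
  exact hh ⟨i, rfl⟩

/-- Mixed pair: a member of the family and an outside hyperplane. -/
lemma corner_mixed (hinj : Function.Injective W)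
    (hcross : ∀ i j, i ≠ j → X.Crosses (W i) (W j))
    (i : Fin n) (χi : Bool) {h' : X.H} (hh' : h' ∉ Set.range W) :
    ∃ y, X.side (W i) y = χi ∧ X.side h' y = X.cB W hmax h' := by
  by_cases hij : X.cIdx W hmax h' = i
  · by_cases hβ : X.cBeta W hmax h' = χi
    · obtain ⟨y, hy⟩ := X.halfspace_nonempty (W i) χi
      exact ⟨y, hy, X.cSpec W hmax h' y (by rw [hij, hβ]; exact hy)⟩
    · have hβ' : X.cBeta W hmax h' = !χi := Bool.eq_not_iff.mpr hβ
      by_contra hc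
      push_neg at hc
      apply hh'
      refine ⟨i, (eq_of_two_incl (k := W i) (β := !χi) (c := X.cB W hmax h') ?_ ?_).symm⟩
      · intro z hz
        exact X.cSpec W hmax h' z (by rw [hij, hβ', hz])
      · intro z hz
        rw [Bool.not_not] at hz
        have := hc z hz
        rwa [← Bool.eq_not_iff] at this
  · obtain ⟨y, hy1, hy2⟩ := hcross i (X.cIdx W hmax h') (fun he => hij he.symm)
      χi (X.cBeta W hmax h')
    exact ⟨y, hy1, X.cSpec W hmax h' y hy2⟩

/-- Outside pair. -/
lemma corner_outside (hinj : Function.Injective W)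
    (hcross : ∀ i j, i ≠ j → X.Crosses (W i) (W j))
    {h h' : X.H} (hh : h ∉ Set.range W) (hh' : h' ∉ Set.range W) :
    ∃ y, X.side h y = X.cB W hmax h ∧ X.side h' y = X.cB W hmax h' := by
  by_cases hij : X.cIdx W hmax h' = X.cIdx W hmax h
  · by_cases hβ : X.cBeta W hmax h' = X.cBeta W hmax h
    · obtain ⟨y, hy⟩ := X.halfspace_nonempty (W (X.cIdx W hmax h)) (X.cBeta W hmax h)
      refine ⟨y, X.cSpec W hmax h y hy, X.cSpec W hmax h' y ?_⟩
      rw [hij, hβ]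
      exact hy
    · have hβ' : X.cBeta W hmax h' = !(X.cBeta W hmax h) := Bool.eq_not_iff.mpr hβ
      by_contra hc
      push_neg at hc
      apply hh'
      refine ⟨X.cIdx W hmax h, (eq_of_two_incl (k := W (X.cIdx W hmax h))
        (β := !(X.cBeta W hmax h)) (c := X.cB W hmax h') ?_ ?_).symm⟩
      · intro z hz
        exact X.cSpec W hmax h' z (by rw [hij, hβ', hz])
      · intro z hz
        rw [Bool.not_not] at hz
        have hzh := X.cSpec W hmax h z hz
        have := hc z hzh
        rwa [← Bool.eq_not_iff] at this
  · obtain ⟨y, hy1, hy2⟩ := hcross (X.cIdx W hmax h) (X.cIdx W hmax h')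
      (fun he => hij he.symm) (X.cBeta W hmax h) (X.cBeta W hmax h')
    exact ⟨y, X.cSpec W hmax h y hy1, X.cSpec W hmax h' y hy2⟩

lemma corner_pairwise (hinj : Function.Injective W)
    (hcross : ∀ i j, i ≠ j → X.Crosses (W i) (W j)) (χ : Fin n → Bool) (h h' : X.H) :
    ∃ y, X.side h y = X.corient W hmax χ h ∧ X.side h' y = X.corient W hmax χ h' := by
  by_cases hh : h ∈ Set.range W <;> by_cases hh' : h' ∈ Set.range W
  · obtain ⟨i, rfl⟩ := hh
    obtain ⟨j, rfl⟩ := hh'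
    rw [X.corient_W W hmax hinj, X.corient_W W hmax hinj]
    by_cases hij : i = j
    · subst hij
      obtain ⟨y, hy⟩ := X.halfspace_nonempty (W i) (χ i)
      exact ⟨y, hy, hy⟩
    · exact hcross i j hij (χ i) (χ j)
  · obtain ⟨i, rfl⟩ := hh
    rw [X.corient_W W hmax hinj, X.corient_not W hmax _ hh']
    exact X.corner_mixed W hmax hinj hcross i (χ i) hh'
  · obtain ⟨j, rfl⟩ := hh'
    rw [X.corient_W W hmax hinj, X.corient_not W hmax _ hh]
    obtain ⟨y, hy1, hy2⟩ := X.corner_mixed W hmax hinj hcross j (χ j) hh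
    exact ⟨y, hy2, hy1⟩
  · rw [X.corient_not W hmax _ hh, X.corient_not W hmax _ hh']
    exact X.corner_outside W hmax hinj hcross hh hh'

lemma corner_exists (hinj : Function.Injective W)
    (hcross : ∀ i j, i ≠ j → X.Crosses (W i) (W j)) (χ : Fin n → Bool) :
    ∃ v : X.V, ∀ h, X.side h v = X.corient W hmax χ h := by
  obtain ⟨x₀⟩ := X.nonempty_V
  apply X.realize _ x₀ (fun h h' => X.corner_pairwise W hmax hinj hcross χ h h')
  have hsub : {h : X.H | X.corient W hmax χ h ≠ X.side h x₀} ⊆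
      Set.range W ∪ ⋃ (p : Fin n × Bool),
        {h : X.H | X.side h x₀ ≠ X.side h (X.halfspace_nonempty (W p.1) p.2).choose} := by
    intro h hd
    by_cases hh : h ∈ Set.range W
    · exact Or.inl hh
    · right
      have hd' : X.corient W hmax χ h ≠ X.side h x₀ := hd
      rw [X.corient_not W hmax _ hh] at hd'
      refine Set.mem_iUnion.2 ⟨⟨X.cIdx W hmax h, X.cBeta W hmax h⟩, ?_⟩
      have hy := (X.halfspace_nonempty (W (X.cIdx W hmax h)) (X.cBeta W hmax h)).choose_spec
      have hcb : X.side h (X.halfspace_nonempty (W (X.cIdx W hmax h)) (X.cBeta W hmax h)).choose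
          = X.cB W hmax h := X.cSpec W hmax h _ hy
      simp only [Set.mem_setOf_eq]
      rw [hcb]
      exact fun he => hd' he.symm
  exact Set.Finite.subset
    ((Set.finite_range W).union (Set.finite_iUnion fun p => X.sep_finite _ _)) hsub

/-- A corner of the maximal cube. -/
noncomputable def corner (hinj : Function.Injective W)
    (hcross : ∀ i j, i ≠ j → X.Crosses (W i) (W j)) (χ : Fin n → Bool) : X.V :=
  (X.corner_exists W hmax hinj hcross χ).choose

lemma corner_side (hinj : Function.Injective W)
    (hcross : ∀ i j, i ≠ j → X.Crosses (W i) (W j)) (χ : Fin n → Bool) (h : X.H) :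
    X.side h (X.corner W hmax hinj hcross χ) = X.corient W hmax χ h :=
  (X.corner_exists W hmax hinj hcross χ).choose_spec h

lemma corner_sepF (hinj : Function.Injective W)
    (hcross : ∀ i j, i ≠ j → X.Crosses (W i) (W j)) (χ χ' : Fin n → Bool) :
    X.sepF (X.corner W hmax hinj hcross χ) (X.corner W hmax hinj hcross χ') =
      (Finset.univ.filter (fun j => χ j ≠ χ' j)).image W := by
  ext h
  rw [mem_sepF, X.corner_side, X.corner_side, Finset.mem_image]
  constructor
  · intro hd
    by_cases hh : h ∈ Set.range W
    · obtain ⟨i, rfl⟩ := hh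
      rw [X.corient_W W hmax hinj, X.corient_W W hmax hinj] at hd
      exact ⟨i, Finset.mem_filter.2 ⟨Finset.mem_univ _, hd⟩, rfl⟩
    · rw [X.corient_not W hmax _ hh, X.corient_not W hmax _ hh] at hd
      exact absurd rfl hd
  · rintro ⟨i, hi, rfl⟩
    rw [X.corient_W W hmax hinj, X.corient_W W hmax hinj]
    exact (Finset.mem_filter.1 hi).2

lemma corner_mem_carrier (hinj : Function.Injective W)
    (hcross : ∀ i j, i ≠ j → X.Crosses (W i) (W j)) (χ : Fin n → Bool) (i : Fin n) :
    X.corner W hmax hinj hcross χ ∈ X.carrier (W i) := by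
  set χ' := Function.update χ i (!χ i) with hχ'
  have hfilter : (Finset.univ.filter (fun j => χ j ≠ χ' j)) = {i} := by
    ext j
    simp only [Finset.mem_filter, Finset.mem_univ, true_and, Finset.mem_singleton, hχ']
    by_cases hj : j = i
    · subst hj; simp
    · simp [Function.update_of_ne hj, hj]
  have hsep : X.sepF (X.corner W hmax hinj hcross χ) (X.corner W hmax hinj hcross χ') = {W i} := by
    rw [X.corner_sepF W hmax hinj hcross, hfilter, Finset.image_singleton]
  refine ⟨X.corner W hmax hinj hcross χ', ⟨W i, ?_, ?_⟩, ?_⟩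
  · rw [← mem_sepF, hsep]; exact Finset.mem_singleton_self _
  · intro h' hh'
    have : h' ∈ ({W i} : Finset X.H) := hsep ▸ mem_sepF.2 hh'
    exact Finset.mem_singleton.1 this
  · rw [← mem_sepF, hsep]; exact Finset.mem_singleton_self _

/-- All 0-cubes lying in every carrier agree on hyperplanes outside the family. -/
lemma carrier_agree {y : X.V} (hy : ∀ i, y ∈ X.carrier (W i)) {h : X.H}
    (hh : h ∉ Set.range W) : X.side h y = X.cB W hmax h := by
  obtain ⟨y', ⟨h₀, h₀sep, h₀uniq⟩, hWi⟩ := hy (X.cIdx W hmax h)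
  have hWeq : W (X.cIdx W hmax h) = h₀ := h₀uniq _ hWi
  have hside : X.side h y = X.side h y' := by
    by_contra hc
    exact hh ⟨X.cIdx W hmax h, hWeq ▸ (h₀uniq h hc).symm⟩
  by_cases hc : X.side (W (X.cIdx W hmax h)) y = X.cBeta W hmax h
  · exact X.cSpec W hmax h y hc
  · have h2 : X.side (W (X.cIdx W hmax h)) y = !(X.cBeta W hmax h) := Bool.eq_not_iff.mpr hc
    have h3 : X.side (W (X.cIdx W hmax h)) y' ≠ !(X.cBeta W hmax h) := by
      rw [← h2]
      exact fun e => hWi e.symm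
    have hy' : X.side (W (X.cIdx W hmax h)) y' = X.cBeta W hmax h := by
      rw [← Bool.not_not (X.cBeta W hmax h)]
      exact Bool.eq_not_iff.mpr h3
    rw [hside]
    exact X.cSpec W hmax h y' hy'

end Corner

end CCC
namespace CCC

attribute [local instance 10] Classical.propDecidable

variable {X : CCC}

/-- From `v`, one can cross first some hyperplane separating `v` from `x`. -/
lemma first_step {v x : X.V} (hvx : (X.sepF v x).Nonempty) :
    ∃ (h₀ : X.H) (v' : X.V), X.side h₀ v' ≠ X.side h₀ v ∧
      (∀ h, h ≠ h₀ → X.side h v' = X.side h v) ∧ X.side h₀ x ≠ X.side h₀ v := by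
  have hfin : {h : X.H | X.side h v ≠ X.side h x}.Finite := X.sep_finite v x
  have hsne : {h : X.H | X.side h v ≠ X.side h x}.Nonempty := by
    obtain ⟨h, hh⟩ := hvx
    exact ⟨h, mem_sepF.1 hh⟩
  obtain ⟨h₀, h₀mem, hmaxw⟩ := Set.Finite.exists_maximalFor
    (fun h => ({z | X.side h z = X.side h x} : Set X.V)) _ hfin hsne
  have quarter : ∀ h', X.side h' v ≠ X.side h' x → h' ≠ h₀ →
      ∃ y, X.side h₀ y = X.side h₀ x ∧ X.side h' y = X.side h' v := by
    intro h' hsep' hne'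
    by_contra hcq
    push_neg at hcq
    have hsubset : ({z | X.side h₀ z = X.side h₀ x} : Set X.V) ⊆
        {z | X.side h' z = X.side h' x} := by
      intro z hz
      have h1 := hcq z hz
      have h2 : X.side h' v = !(X.side h' x) := Bool.eq_not_iff.mpr hsep'
      rw [h2] at h1
      rw [← Bool.not_not (X.side h' x)]
      exact Bool.eq_not_iff.mpr h1
    have heq := Set.Subset.antisymm hsubset (hmaxw hsep' hsubset)
    have hiff : ∀ z, X.side h₀ z = X.side h₀ x ↔ X.side h' z = X.side h' x := by
      intro z
      constructor
      · intro hz; exact (Set.ext_iff.1 heq z).1 hz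
      · intro hz; exact (Set.ext_iff.1 heq z).2 hz
    exact hne' (eq_of_halfspace_eq hiff).symm
  set o : X.H → Bool := fun h => if h = h₀ then X.side h₀ x else X.side h v with ho
  have hpair : ∀ h h', ∃ y, X.side h y = o h ∧ X.side h' y = o h' := by
    intro h h'
    by_cases hh : h = h₀ <;> by_cases hh' : h' = h₀
    · subst hh; subst hh'
      exact ⟨x, by simp [ho], by simp [ho]⟩
    · subst hh
      by_cases hs' : X.side h' v = X.side h' x
      · exact ⟨x, by simp [ho], by simp [ho, hh', hs']⟩
      · obtain ⟨y, hy1, hy2⟩ := quarter h' hs' hh'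
        exact ⟨y, by simp [ho, hy1], by simp [ho, hh', hy2]⟩
    · subst hh'
      by_cases hs : X.side h v = X.side h x
      · exact ⟨x, by simp [ho, hh, hs], by simp [ho]⟩
      · obtain ⟨y, hy1, hy2⟩ := quarter h hs hh
        exact ⟨y, by simp [ho, hh, hy2], by simp [ho, hy1]⟩
    · exact ⟨v, by simp [ho, hh], by simp [ho, hh']⟩
  have hfin2 : {h : X.H | o h ≠ X.side h v}.Finite := by
    apply Set.Finite.subset (Set.finite_singleton h₀)
    intro h hh
    simp only [Set.mem_setOf_eq, ho] at hh
    by_contra hne'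
    have : h ≠ h₀ := fun he => hne' (he ▸ Set.mem_singleton h₀)
    rw [if_neg this] at hh
    exact hh rfl
  obtain ⟨v', hv'⟩ := X.realize o v hpair hfin2
  refine ⟨h₀, v', ?_, ?_, fun he => h₀mem he.symm⟩
  · rw [hv' h₀, ho]
    simp only [if_pos rfl]
    exact fun he => h₀mem he.symm
  · intro h hne'
    rw [hv' h, ho]
    simp [hne']

end CCC
namespace CCC

attribute [local instance 10] Classical.propDecidable

variable {X : CCC}

lemma crosses_symm {h h' : X.H} (hc : X.Crosses h h') : X.Crosses h' h := fun b b' => by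
  obtain ⟨x, hx1, hx2⟩ := hc b' b
  exact ⟨x, hx2, hx1⟩

lemma not_crosses_self (h : X.H) : ¬ X.Crosses h h := by
  intro hc
  obtain ⟨x, hx1, hx2⟩ := hc true false
  rw [hx1] at hx2
  exact Bool.noConfusion hx2

/-- Any pairwise-crossing family extends to a maximal one. -/
lemma exists_maximal_crossing (hXn : X.NoInfiniteCrossing) (C : Set X.H)
    (hC : ∀ h ∈ C, ∀ h' ∈ C, h ≠ h' → X.Crosses h h') :
    ∃ M : Set X.H, C ⊆ M ∧ (∀ h ∈ M, ∀ h' ∈ M, h ≠ h' → X.Crosses h h') ∧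
      ∀ h, ∃ h' ∈ M, ¬ X.Crosses h h' := by
  set P : Set (Set X.H) := {T | C ⊆ T ∧ ∀ h ∈ T, ∀ h' ∈ T, h ≠ h' → X.Crosses h h'} with hP
  have hchain : ∀ c ⊆ P, IsChain (· ⊆ ·) c → c.Nonempty →
      ∃ ub ∈ P, ∀ s ∈ c, s ⊆ ub := by
    intro c hcP hchain ⟨t₀, ht₀⟩
    refine ⟨⋃₀ c, ⟨?_, ?_⟩, fun s hs => Set.subset_sUnion_of_mem hs⟩
    · exact (hcP ht₀).1.trans (Set.subset_sUnion_of_mem ht₀)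
    · rintro h ⟨t1, ht1, hht1⟩ h' ⟨t2, ht2, hht2⟩ hne
      rcases hchain.total ht1 ht2 with h12 | h21
      · exact (hcP ht2).2 h (h12 hht1) h' hht2 hne
      · exact (hcP ht1).2 h hht1 h' (h21 hht2) hne
  obtain ⟨M, hCM, hMP, hMmax⟩ := zorn_subset_nonempty P hchain C ⟨subset_refl C, hC⟩
  refine ⟨M, hCM, hMP.2, ?_⟩
  intro h
  by_contra hc
  push_neg at hc
  have hno : h ∉ M → False := by
    intro hhM
    have hMh : M ∪ {h} ∈ P := by
      constructor
      · exact hCM.trans Set.subset_union_left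
      · rintro a (haM | hah) b (hbM | hbh) hne
        · exact hMP.2 a haM b hbM hne
        · rw [Set.mem_singleton_iff] at hbh; subst hbh
          exact crosses_symm (hc a haM)
        · rw [Set.mem_singleton_iff] at hah; subst hah
          exact hc b hbM
        · rw [Set.mem_singleton_iff] at hah hbh
          exact absurd (hah.trans hbh.symm) hne
    have := hMmax hMh Set.subset_union_left
    exact hhM (this (Set.mem_union_right M rfl))
  apply hno
  intro hhM
  exact not_crosses_self h (hc h hhM)

/-- One-step extension of a geodesic at `v` across a fresh hyperplane. -/
lemma extend_one (hGC : X.CombGeodComplete) (hne : Nonempty X.H)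
    (hXn : X.NoInfiniteCrossing) (v : X.V) (S : Set X.H) (k : X.H → ℕ)
    (hdesc : ∀ h ∈ S, ∀ h' ∈ S, h' ≠ h →
      (∀ z, X.side h' z = X.side h' v → X.side h z = X.side h v) → k h' < k h)
    (hfar : ∀ h ∈ S, ∀ h' ∈ S, ∃ z, X.side h z ≠ X.side h v ∧ X.side h' z ≠ X.side h' v) :
    ∃ (h₀ : X.H) (v' : X.V), h₀ ∉ S ∧ X.side h₀ v' ≠ X.side h₀ v ∧
      ∀ h, h ≠ h₀ → X.side h v' = X.side h v := by
  classical
  set C : Set X.H := {h | h ∈ S ∧ ∀ h' ∈ S,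
    (∀ z, X.side h' z = X.side h' v → X.side h z = X.side h v) → h' = h} with hCdef
  have hCS : C ⊆ S := fun h hh => hh.1
  -- (a) every member of S is "outside" some minimal element
  have reach : ∀ m, ∀ h, h ∈ S → k h ≤ m →
      ∃ c ∈ C, ∀ z, X.side c z = X.side c v → X.side h z = X.side h v := by
    intro m
    induction m with
    | zero =>
      intro h hh hk
      by_cases hhC : h ∈ C
      · exact ⟨h, hhC, fun z hz => hz⟩
      · exfalso
        simp only [hCdef, Set.mem_setOf_eq, not_and, not_forall] at hhC
        obtain ⟨h', hh', hincl, hne'⟩ := hhC hh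
        have := hdesc h hh h' hh' hne' hincl
        omega
    | succ m ih =>
      intro h hh hk
      by_cases hhC : h ∈ C
      · exact ⟨h, hhC, fun z hz => hz⟩
      · simp only [hCdef, Set.mem_setOf_eq, not_and, not_forall] at hhC
        obtain ⟨h', hh', hincl, hne'⟩ := hhC hh
        have hlt := hdesc h hh h' hh' hne' hincl
        obtain ⟨c, hcC, hcincl⟩ := ih h' hh' (by omega)
        exact ⟨c, hcC, fun z hz => hincl z (hcincl z hz)⟩
  have reach' : ∀ h ∈ S, ∃ c ∈ C, ∀ z, X.side c z = X.side c v → X.side h z = X.side h v :=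
    fun h hh => reach (k h) h hh le_rfl
  -- (b) C is pairwise crossing
  have hCcross : ∀ h ∈ C, ∀ h' ∈ C, h ≠ h' → X.Crosses h h' := by
    intro h hhC h' hh'C hne'
    intro b b'
    by_cases hb : b = X.side h v <;> by_cases hb' : b' = X.side h' v
    · exact ⟨v, hb.symm ▸ rfl, hb'.symm ▸ rfl⟩
    · by_contra hcq
      push_neg at hcq
      apply hne'
      apply hh'C.2 h (hCS hhC)
      intro z hz
      by_contra hzc
      have hz' : X.side h' z = b' := by
        have h1 : X.side h' z ≠ X.side h' v := hzc
        have h2 : b' = !(X.side h' v) := Bool.eq_not_iff.mpr hb'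
        rw [h2]
        exact Bool.eq_not_iff.mpr h1
      exact hcq z (hb ▸ hz) hz'
    · by_contra hcq
      push_neg at hcq
      apply hne'.symm
      apply hhC.2 h' (hCS hh'C)
      intro z hz
      by_contra hzc
      have hz' : X.side h z = b := by
        have h2 : b = !(X.side h v) := Bool.eq_not_iff.mpr hb
        rw [h2]
        exact Bool.eq_not_iff.mpr hzc
      exact hcq z hz' (hb' ▸ hz)
    · obtain ⟨z, hz1, hz2⟩ := hfar h (hCS hhC) h' (hCS hh'C)
      refine ⟨z, ?_, ?_⟩
      · rw [Bool.eq_not_iff.mpr hb]; exact Bool.eq_not_iff.mpr hz1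
      · rw [Bool.eq_not_iff.mpr hb']; exact Bool.eq_not_iff.mpr hz2
  -- (d) extend to a maximal pairwise-crossing family
  obtain ⟨M, hCM, hMcross, hMmax⟩ := exists_maximal_crossing hXn C hCcross
  have hMfin : M.Finite := hXn M hMcross
  -- (e) enumerate M
  set F := hMfin.toFinset with hF
  set n := F.card with hn
  set W : Fin n → X.H := fun i => (F.equivFin.symm i : X.H) with hW
  have hWmem : ∀ i, W i ∈ M := by
    intro i
    exact hMfin.mem_toFinset.mp (F.equivFin.symm i).2
  have hWsurj : ∀ h ∈ M, ∃ i, W i = h := by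
    intro h hh
    refine ⟨F.equivFin ⟨h, hMfin.mem_toFinset.mpr hh⟩, ?_⟩
    rw [hW]
    simp
  have hWinj : Function.Injective W := by
    intro i j hij
    have : F.equivFin.symm i = F.equivFin.symm j := Subtype.ext hij
    exact F.equivFin.symm.injective this
  have hWcross : ∀ i j, i ≠ j → X.Crosses (W i) (W j) := by
    intro i j hij
    exact hMcross _ (hWmem i) _ (hWmem j) (fun he => hij (hWinj he))
  have hWmax : ∀ h, ¬ ∀ i, X.Crosses h (W i) := by
    intro h hall
    obtain ⟨h', hh'M, hnc⟩ := hMmax h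
    obtain ⟨i, rfl⟩ := hWsurj h' hh'M
    exact hnc (hall i)
  -- (f) apply geodesic completeness
  set χ : Fin n → Bool := fun i => X.side (W i) v with hχ
  set y₀ := X.corner W hWmax hWinj hWcross χ with hy₀
  obtain ⟨x, hxside, hxfar⟩ := hGC n W hWinj hWcross hWmax χ (X.dist v y₀ + 1)
  have hdy : X.dist v y₀ + 1 ≤ X.dist x y₀ :=
    hxfar y₀ (fun i => X.corner_mem_carrier W hWmax hWinj hWcross χ i)
  have hvx : (X.sepF v x).Nonempty := by
    rw [Finset.nonempty_iff_ne_empty]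
    intro hemp
    have hvxeq : v = x := eq_of_sepF_eq_empty hemp
    rw [← hvxeq] at hdy
    omega
  have hSagree : ∀ h ∈ S, X.side h x = X.side h v := by
    intro h hh
    obtain ⟨c, hcC, hincl⟩ := reach' h hh
    obtain ⟨i, rfl⟩ := hWsurj c (hCM hcC)
    exact hincl x (hxside i)
  obtain ⟨h₀, v', hs1, hs2, hs3⟩ := first_step hvx
  refine ⟨h₀, v', ?_, hs1, hs2⟩
  intro hh₀S
  exact hs3 (hSagree h₀ hh₀S)

end CCC
namespace CCC

attribute [local instance 10] Classical.propDecidable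

variable {X : CCC}

lemma exists_flip {p : ℕ → X.V} {h : X.H} {a b : ℕ} (hab : a ≤ b)
    (hs : X.side h (p a) ≠ X.side h (p b)) :
    ∃ t, a ≤ t ∧ t < b ∧ X.side h (p t) ≠ X.side h (p (t+1)) := by
  induction b with
  | zero =>
    interval_cases a
    exact absurd rfl hs
  | succ b ih =>
    rcases Nat.lt_or_ge a (b+1) with hab' | hab'
    · have hab'' : a ≤ b := by omega
      by_cases hflip : X.side h (p b) = X.side h (p (b+1))
      · obtain ⟨t, ht1, ht2, ht3⟩ := ih hab'' (fun he => hs (he.trans hflip))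
        exact ⟨t, ht1, by omega, ht3⟩
      · exact ⟨b, hab'', by omega, hflip⟩
    · have : a = b + 1 := by omega
      subst this
      exact absurd rfl hs

lemma const_of_no_flip {p : ℕ → X.V} {h : X.H} {a b : ℕ} (hab : a ≤ b)
    (hnf : ∀ t, a ≤ t → t < b → X.side h (p t) = X.side h (p (t+1))) :
    X.side h (p a) = X.side h (p b) := by
  by_contra hs
  obtain ⟨t, ht1, ht2, ht3⟩ := exists_flip hab hs
  exact ht3 (hnf t ht1 ht2)

section Ray

variable {γ : ℕ → X.V} (hγ : X.IsGeodesicRay γ)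
include hγ

lemma ray_dist (m n : ℕ) (hmn : m ≤ n) : X.dist (γ m) (γ n) = n - m := hγ m n hmn

lemma ray_flip_unique {h : X.H} {i j : ℕ}
    (hi : h ∈ X.sepF (γ i) (γ (i+1))) (hj : h ∈ X.sepF (γ j) (γ (j+1))) : i = j := by
  have key : ∀ i j : ℕ, i < j → h ∈ X.sepF (γ i) (γ (i+1)) →
      h ∈ X.sepF (γ j) (γ (j+1)) → False := by
    intro i j hij hi hj
    have hdisj : Disjoint (X.sepF (γ i) (γ (i+1))) (X.sepF (γ (i+1)) (γ (j+1))) := by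
      refine (sepF_add ?_).1
      rw [hγ i (i+1) (by omega), hγ (i+1) (j+1) (by omega), hγ i (j+1) (by omega)]
      omega
    have hsub : X.sepF (γ j) (γ (j+1)) ⊆ X.sepF (γ (i+1)) (γ (j+1)) := by
      refine sepF_right_subset (y := γ j) ?_
      rw [hγ (i+1) j (by omega), hγ j (j+1) (by omega), hγ (i+1) (j+1) (by omega)]
      omega
    exact Finset.disjoint_left.mp hdisj hi (hsub hj)
  rcases lt_trichotomy i j with hlt | heq | hgt
  · exact absurd (key i j hlt hi hj) not_false
  · exact heq
  · exact absurd (key j i hgt hj hi) not_false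

lemma ray_no_flip {h : X.H} {m : ℕ} (hm : X.side h (γ m) ≠ X.side h (γ (m+1))) :
    ∀ t, t ≠ m → X.side h (γ t) = X.side h (γ (t+1))  := by
  intro t ht
  by_contra hflip
  exact ht (ray_flip_unique hγ (mem_sepF.2 hflip) (mem_sepF.2 hm))

lemma ray_side_le {h : X.H} {m : ℕ} (hm : X.side h (γ m) ≠ X.side h (γ (m+1)))
    {i : ℕ} (hi : i ≤ m) : X.side h (γ i) = X.side h (γ 0) := by
  refine (const_of_no_flip (Nat.zero_le i) ?_).symm
  intro t _ ht2
  exact ray_no_flip hγ hm t (by omega)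

lemma ray_side_gt {h : X.H} {m : ℕ} (hm : X.side h (γ m) ≠ X.side h (γ (m+1)))
    {i : ℕ} (hi : m < i) : X.side h (γ i) ≠ X.side h (γ 0) := by
  have h1 : X.side h (γ (m+1)) = X.side h (γ i) := by
    refine const_of_no_flip (by omega) ?_
    intro t ht1 _
    exact ray_no_flip hγ hm t (by omega)
  have h2 : X.side h (γ m) = X.side h (γ 0) := ray_side_le hγ hm le_rfl
  rw [← h1, ← h2]
  exact fun he => hm he.symm

lemma ray_sep_subset_WSet {j : ℕ} : (X.sepF (γ 0) (γ j) : Set X.H) ⊆ X.WSet γ := by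
  intro h hh
  have hh' : X.side h (γ 0) ≠ X.side h (γ j) := mem_sepF.1 hh
  obtain ⟨t, _, _, ht⟩ := exists_flip (Nat.zero_le j) hh'
  exact ⟨t, ht⟩

/-- Backward one-step extension of a geodesic ray. -/
lemma ray_extend (hGC : X.CombGeodComplete) (hne : Nonempty X.H)
    (hXn : X.NoInfiniteCrossing) :
    ∃ γ' : ℕ → X.V, X.IsGeodesicRay γ' ∧ ∀ i, γ' (i+1) = γ i := by
  classical
  set v := γ 0 with hv
  set k : X.H → ℕ := fun h => if hh : h ∈ X.WSet γ then hh.choose else 0 with hk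
  have hkspec : ∀ h (hh : h ∈ X.WSet γ), X.side h (γ (k h)) ≠ X.side h (γ (k h + 1)) := by
    intro h hh
    rw [hk]
    simp only [dif_pos hh]
    exact hh.choose_spec
  have hside0 : ∀ h (hh : h ∈ X.WSet γ) i, (X.side h (γ i) = X.side h v ↔ i ≤ k h) := by
    intro h hh i
    constructor
    · intro hi
      by_contra hgt
      exact ray_side_gt hγ (hkspec h hh) (by omega) hi
    · intro hi
      exact ray_side_le hγ (hkspec h hh) hi
  obtain ⟨h₀, v', hh₀S, hside₀, hrest⟩ := extend_one hGC hne hXn v (X.WSet γ) k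
    (by
      intro h hh h' hh' hne' hincl
      have hz : X.side h (γ (k h + 1)) ≠ X.side h v := by
        intro he
        exact hkspec h hh (he.trans ((hside0 h hh (k h)).2 le_rfl).symm).symm
      have hz' : X.side h' (γ (k h + 1)) ≠ X.side h' v := by
        intro he
        exact hz (hincl _ he)
      have hle : ¬ (k h + 1 ≤ k h') := fun hle => hz' ((hside0 h' hh' _).2 hle)
      have hne'' : k h' ≠ k h := by
        intro he
        apply hne'
        have hcard : (X.sepF (γ (k h)) (γ (k h + 1))).card = 1 := by
          rw [← dist_eq_card, hγ (k h) (k h + 1) (by omega)]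
          omega
        have hm1 : h' ∈ X.sepF (γ (k h)) (γ (k h + 1)) := by
          rw [mem_sepF, ← he]
          exact hkspec h' hh'
        have hm2 : h ∈ X.sepF (γ (k h)) (γ (k h + 1)) := mem_sepF.2 (hkspec h hh)
        exact Finset.card_le_one.mp (le_of_eq hcard) _ hm1 _ hm2
      omega)
    (by
      intro h hh h' hh'
      refine ⟨γ (max (k h) (k h') + 1), ?_, ?_⟩
      · intro he
        exact ray_side_gt hγ (hkspec h hh) (by omega) he
      · intro he
        exact ray_side_gt hγ (hkspec h' hh') (by omega) he)
  refine ⟨fun i => match i with | 0 => v' | (j+1) => γ j, ?_, fun i => rfl⟩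
  intro m n hmn
  match m, n with
  | 0, 0 => simp [dist_eq_zero_iff]
  | 0, (j+1) =>
    have hsep : X.sepF v' (γ j) = insert h₀ (X.sepF (γ 0) (γ j)) := by
      ext h
      rw [mem_sepF, Finset.mem_insert, mem_sepF]
      by_cases hh : h = h₀
      · subst hh
        simp only [true_or, iff_true]
        have : X.side h (γ j) = X.side h (γ 0) := by
          by_contra hc
          exact hh₀S (ray_sep_subset_WSet hγ (mem_sepF.2 (fun he => hc he.symm)))
        rw [this]
        exact hside₀
      · rw [hrest h hh]
        simp [hh, hv]
    have hnotin : h₀ ∉ X.sepF (γ 0) (γ j) := by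
      intro hc
      exact hh₀S (ray_sep_subset_WSet hγ hc)
    rw [dist_eq_card, hsep, Finset.card_insert_of_notMem hnotin, ← dist_eq_card,
      hγ 0 j (Nat.zero_le j)]
    omega
  | (i+1), (j+1) =>
    rw [hγ i j (by omega)]
    omega

end Ray

end CCC
namespace CCC

attribute [local instance 10] Classical.propDecidable

variable {X : CCC}

/-- Every combinatorial geodesic ray extends to a bi-infinite combinatorial geodesic. -/
lemma ray_to_line (hGC : X.CombGeodComplete) (hne : Nonempty X.H)
    (hXn : X.NoInfiniteCrossing) {γ : ℕ → X.V} (hγ : X.IsGeodesicRay γ) :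
    ∃ α : ℤ → X.V, X.IsGeodesicLine α ∧ ∀ i : ℕ, α (i : ℤ) = γ i := by
  classical
  have step : ∀ p : {g : ℕ → X.V // X.IsGeodesicRay g},
      ∃ q : {g : ℕ → X.V // X.IsGeodesicRay g}, ∀ i, q.1 (i+1) = p.1 i := by
    rintro ⟨g, hg⟩
    obtain ⟨g', hg', hsh⟩ := ray_extend hg hGC hne hXn
    exact ⟨⟨g', hg'⟩, hsh⟩
  obtain ⟨T, hT0, hTs⟩ : ∃ T : ℕ → {g : ℕ → X.V // X.IsGeodesicRay g},
      T 0 = ⟨γ, hγ⟩ ∧ ∀ m, T (m+1) = (step (T m)).choose :=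
    ⟨fun m => Nat.rec ⟨γ, hγ⟩ (fun _ p => (step p).choose) m, rfl, fun m => rfl⟩
  have hshift : ∀ m i, (T (m+1)).1 (i+1) = (T m).1 i := by
    intro m i
    rw [hTs]
    exact (step (T m)).choose_spec i
  have hshiftd : ∀ d m i, (T (m+d)).1 (i+d) = (T m).1 i := by
    intro d
    induction d with
    | zero => intro m i; rfl
    | succ d ih =>
      intro m i
      have h1 : m + (d+1) = (m + d) + 1 := by omega
      have h2 : i + (d+1) = (i + d) + 1 := by omega
      rw [h1, h2, hshift (m+d) (i+d)]
      exact ih m i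
  set α : ℤ → X.V := fun z => (T (-z).toNat).1 ((z + ((-z).toNat : ℕ)).toNat) with hα
  have hval : ∀ (z : ℤ) (m : ℕ), -z ≤ (m:ℤ) → α z = (T m).1 ((z + (m:ℤ)).toNat) := by
    intro z m hm
    have h0 : α z = (T ((-z).toNat)).1 ((z + (((-z).toNat : ℕ) : ℤ)).toNat) := rfl
    obtain ⟨d, rfl⟩ : ∃ d, m = (-z).toNat + d := ⟨m - (-z).toNat, by omega⟩
    have key := hshiftd d ((-z).toNat) ((z + ((((-z).toNat : ℕ)) : ℤ)).toNat)
    have harg : ((z + ((((-z).toNat + d : ℕ)) : ℤ)).toNat) =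
        (z + (((-z).toNat : ℕ) : ℤ)).toNat + d := by
      push_cast
      omega
    rw [harg, key]
  refine ⟨α, ?_, ?_⟩
  · intro m n hmn
    set s : ℕ := m.natAbs + n.natAbs with hs
    have h1 : α m = (T s).1 ((m + (s:ℤ)).toNat) := hval m s (by omega)
    have h2 : α n = (T s).1 ((n + (s:ℤ)).toNat) := hval n s (by omega)
    rw [h1, h2]
    have h3 := (T s).2 ((m + (s:ℤ)).toNat) ((n + (s:ℤ)).toNat) (by omega)
    rw [h3]
    omega
  · intro i
    have h1 : α (i : ℤ) = (T 0).1 (((i:ℤ) + ((0:ℕ):ℤ)).toNat) := hval i 0 (by omega)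
    rw [h1, hT0]
    show γ (((i:ℤ) + ((0:ℕ):ℤ)).toNat) = γ i
    norm_num

end CCC
namespace CCC

attribute [local instance 10] Classical.propDecidable

variable {X : CCC}

lemma seg_reverse {c : ℕ → X.V} {n : ℕ} (hc : X.IsGeodSeg c n) :
    X.IsGeodSeg (fun i => c (n - i)) n := by
  intro i j hij hjn
  simp only []
  rw [dist_comm, hc (n - j) (n - i) (by omega) (by omega)]
  omega

/-- Front one-step extension of a geodesic segment. -/
lemma seg_extend_front (hGC : X.CombGeodComplete) (hne : Nonempty X.H)
    (hXn : X.NoInfiniteCrossing) {c : ℕ → X.V} {n : ℕ} (hc : X.IsGeodSeg c n) :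
    ∃ c' : ℕ → X.V, X.IsGeodSeg c' (n+1) ∧ ∀ i, c' (i+1) = c i := by
  classical
  set v := c 0 with hv
  set S : Set X.H := {h | X.side h (c 0) ≠ X.side h (c n)} with hS
  have hSfin : S.Finite := X.sep_finite _ _
  set k : X.H → ℕ := fun h => (hSfin.toFinset.filter
    (fun h'' => ∀ z, X.side h'' z = X.side h'' v → X.side h z = X.side h v)).card with hk
  obtain ⟨h₀, v', hh₀S, hside₀, hrest⟩ := extend_one hGC hne hXn v S k
    (by
      intro h hh h' hh' hne' hincl
      rw [hk]
      apply Finset.card_lt_card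
      rw [Finset.ssubset_iff_of_subset]
      · refine ⟨h, ?_, ?_⟩
        · exact Finset.mem_filter.2 ⟨hSfin.mem_toFinset.2 hh, fun z hz => hz⟩
        · intro hmem
          have hincl2 := (Finset.mem_filter.1 hmem).2
          exact hne' (eq_of_halfspace_eq
            (a := X.side h' v) (b := X.side h v)
            (fun z => ⟨fun hz => hincl z hz, fun hz => hincl2 z hz⟩))
      · intro h'' hmem
        obtain ⟨hmem1, hmem2⟩ := Finset.mem_filter.1 hmem
        exact Finset.mem_filter.2 ⟨hmem1, fun z hz => hincl z (hmem2 z hz)⟩)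
    (by
      intro h hh h' hh'
      have hh1 : X.side h (c 0) ≠ X.side h (c n) := hh
      have hh2 : X.side h' (c 0) ≠ X.side h' (c n) := hh'
      exact ⟨c n, fun he => hh1 he.symm, fun he => hh2 he.symm⟩)
  refine ⟨fun i => match i with | 0 => v' | (j+1) => c j, ?_, fun i => rfl⟩
  intro i j hij hjn
  match i, j with
  | 0, 0 => simp [dist_eq_zero_iff]
  | 0, (j+1) =>
    show X.dist v' (c j) = j + 1
    have hjn' : j ≤ n := by omega
    have hsub : X.sepF (c 0) (c j) ⊆ X.sepF (c 0) (c n) := by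
      refine sepF_left_subset (y := c j) ?_
      rw [hc 0 j (by omega) hjn', hc j n hjn' le_rfl, hc 0 n (by omega) le_rfl]
      omega
    have hnotin : h₀ ∉ X.sepF (c 0) (c j) := by
      intro hmem
      exact hh₀S (mem_sepF.1 (hsub hmem))
    have hsep : X.sepF v' (c j) = insert h₀ (X.sepF (c 0) (c j)) := by
      ext h
      rw [mem_sepF, Finset.mem_insert, mem_sepF]
      by_cases hh : h = h₀
      · subst hh
        simp only [true_or, iff_true]
        have hcj : X.side h (c j) = X.side h (c 0) := by
          by_contra hcon
          exact hnotin (mem_sepF.2 (fun he => hcon he.symm))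
        rw [hcj]
        rw [hv] at hside₀
        exact hside₀
      · rw [hrest h hh, hv]
        simp [hh]
    rw [dist_eq_card, hsep, Finset.card_insert_of_notMem hnotin, ← dist_eq_card,
      hc 0 j (by omega) hjn']
    omega
  | (i+1), (j+1) =>
    show X.dist (c i) (c j) = (j+1) - (i+1)
    rw [hc i j (by omega) (by omega)]
    omega

/-- Back one-step extension of a geodesic segment. -/
lemma seg_extend_back (hGC : X.CombGeodComplete) (hne : Nonempty X.H)
    (hXn : X.NoInfiniteCrossing) {c : ℕ → X.V} {n : ℕ} (hc : X.IsGeodSeg c n) :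
    ∃ c' : ℕ → X.V, X.IsGeodSeg c' (n+1) ∧ ∀ i ≤ n, c' i = c i := by
  obtain ⟨r', hr', hsh⟩ := seg_extend_front hGC hne hXn (seg_reverse hc)
  refine ⟨fun i => r' ((n+1) - i), seg_reverse hr', ?_⟩
  intro i hi
  show r' ((n+1) - i) = c i
  have h1 : (n+1) - i = (n - i) + 1 := by omega
  rw [h1, hsh (n - i)]
  show c (n - (n - i)) = c i
  congr 1
  omega

/-- Every geodesic segment extends forward to a geodesic ray. -/
lemma seg_to_ray (hGC : X.CombGeodComplete) (hne : Nonempty X.H)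
    (hXn : X.NoInfiniteCrossing) {c : ℕ → X.V} {n : ℕ} (hc : X.IsGeodSeg c n) :
    ∃ ρ : ℕ → X.V, X.IsGeodesicRay ρ ∧ ∀ i ≤ n, ρ i = c i := by
  classical
  have step : ∀ (m : ℕ) (p : {g : ℕ → X.V // X.IsGeodSeg g m}),
      ∃ q : {g : ℕ → X.V // X.IsGeodSeg g (m+1)}, ∀ i ≤ m, q.1 i = p.1 i := by
    rintro m ⟨g, hg⟩
    obtain ⟨g', hg', hag⟩ := seg_extend_back hGC hne hXn hg
    exact ⟨⟨g', hg'⟩, hag⟩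
  obtain ⟨T, hT0, hTs⟩ : ∃ T : (m : ℕ) → {g : ℕ → X.V // X.IsGeodSeg g (n+m)},
      T 0 = ⟨c, hc⟩ ∧ ∀ m, T (m+1) = (step (n+m) (T m)).choose :=
    ⟨fun m => Nat.rec ⟨c, hc⟩ (fun m p => (step (n+m) p).choose) m, rfl, fun m => rfl⟩
  have hagree : ∀ m i, i ≤ n + m → (T (m+1)).1 i = (T m).1 i := by
    intro m i hi
    rw [hTs]
    exact (step (n+m) (T m)).choose_spec i hi
  have hagreed : ∀ d m i, i ≤ n + m → (T (m+d)).1 i = (T m).1 i := by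
    intro d
    induction d with
    | zero => intro m i _; rfl
    | succ d ih =>
      intro m i hi
      have h1 : m + (d+1) = (m + d) + 1 := by omega
      rw [h1, hagree (m+d) i (by omega)]
      exact ih m i hi
  set ρ : ℕ → X.V := fun i => (T i).1 i with hρ
  have hval : ∀ (m i : ℕ), i ≤ n + m → (T m).1 i = ρ i := by
    intro m i hi
    rcases le_or_gt i m with him | him
    · obtain ⟨d, rfl⟩ : ∃ d, m = i + d := ⟨m - i, by omega⟩
      rw [hagreed d i i (by omega)]
    · obtain ⟨d, rfl⟩ : ∃ d, i = m + d := ⟨i - m, by omega⟩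
      show (T m).1 (m + d) = (T (m + d)).1 (m + d)
      exact (hagreed d m (m + d) (by omega)).symm
  refine ⟨ρ, ?_, ?_⟩
  · intro m n' hmn
    rw [← hval n' m (by omega), ← hval n' n' (by omega)]
    exact (T n').2 m n' hmn (by omega)
  · intro i hi
    rw [← hval 0 i (by omega), hT0]

end CCC
namespace CCC

attribute [local instance 10] Classical.propDecidable

variable {X : CCC}

/-- The converse direction: extension of geodesic segments implies geodesic
completeness. -/
lemma converse_direction (hne : Nonempty X.H)
    (hext : ∀ (c : ℕ → X.V) (n : ℕ), X.IsGeodSeg c n →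
      ∃ (α : ℤ → X.V) (k : ℤ), X.IsGeodesicLine α ∧
        ∀ i : ℕ, i ≤ n → α (k + (i : ℤ)) = c i) :
    X.CombGeodComplete := by
  classical
  intro n W hinj hcross hmax χ R
  rcases Nat.eq_zero_or_pos n with hn | hn
  · exfalso
    subst hn
    obtain ⟨h⟩ := hne
    exact hmax h (fun i => i.elim0)
  set χc : ℕ → (Fin n → Bool) := fun t j => if (j:ℕ) < t then χ j else !χ j with hχc
  set c : ℕ → X.V := fun t => X.corner W hmax hinj hcross (χc t) with hcdef
  have hχdiff : ∀ (i j : ℕ) (m : Fin n), i ≤ j →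
      (χc i m ≠ χc j m ↔ (i ≤ (m:ℕ) ∧ (m:ℕ) < j)) := by
    intro i j m hij
    show ((if (m:ℕ) < i then χ m else !χ m) ≠ (if (m:ℕ) < j then χ m else !χ m)) ↔ _
    by_cases h1 : (m:ℕ) < i
    · rw [if_pos h1, if_pos (by omega : (m:ℕ) < j)]
      simp only [ne_eq, not_true_eq_false, false_iff]
      omega
    · by_cases h2 : (m:ℕ) < j
      · rw [if_neg h1, if_pos h2]
        constructor
        · intro _; omega
        · intro _; cases hb : χ m <;> simp
      · rw [if_neg h1, if_neg h2]
        simp only [ne_eq, not_true_eq_false, false_iff]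
        omega
  have hsepc : ∀ i j : ℕ, i ≤ j → j ≤ n →
      X.sepF (c i) (c j) = (Finset.univ.filter
        (fun m : Fin n => χc i m ≠ χc j m)).image W := by
    intro i j hij hjn
    rw [hcdef]
    exact X.corner_sepF W hmax hinj hcross (χc i) (χc j)
  have hseg : X.IsGeodSeg c n := by
    intro i j hij hjn
    have hfil : (Finset.univ.filter (fun m : Fin n => χc i m ≠ χc j m)) =
        (Finset.Ico i j).attachFin
          (fun m hm => lt_of_lt_of_le (Finset.mem_Ico.1 hm).2 hjn) := by
      ext m
      rw [Finset.mem_filter, Finset.mem_attachFin, Finset.mem_Ico]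
      simp only [Finset.mem_univ, true_and]
      rw [hχdiff i j m hij]
    rw [dist_eq_card, hsepc i j hij hjn,
      Finset.card_image_of_injective _ hinj, hfil,
      Finset.card_attachFin, Nat.card_Ico]
  obtain ⟨α, k, hα, hαc⟩ := hext c n hseg
  set ρ : ℕ → X.V := fun i => α (k + (i:ℤ)) with hρ
  have hray : X.IsGeodesicRay ρ := by
    intro m m' hmm
    show X.dist (α (k + (m:ℤ))) (α (k + (m':ℤ))) = m' - m
    have := hα (k + (m:ℤ)) (k + (m':ℤ)) (by omega)
    omega
  have hρc : ∀ i ≤ n, ρ i = c i := fun i hi => hαc i hi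
  -- the cube edges of the ray
  have hedge : ∀ i : Fin n, X.sepF (ρ (i:ℕ)) (ρ ((i:ℕ)+1)) = {W i} := by
    intro i
    have hfil : (Finset.univ.filter
        (fun m : Fin n => χc (i:ℕ) m ≠ χc ((i:ℕ)+1) m)) = {i} := by
      ext m
      rw [Finset.mem_filter, Finset.mem_singleton]
      simp only [Finset.mem_univ, true_and]
      rw [hχdiff (i:ℕ) ((i:ℕ)+1) m (by omega), Fin.ext_iff]
      omega
    rw [hρc _ (by omega), hρc _ (by omega),
      hsepc (i:ℕ) ((i:ℕ)+1) (by omega) (by omega), hfil, Finset.image_singleton]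
  have hWflip : ∀ i : Fin n, X.side (W i) (ρ (i:ℕ)) ≠ X.side (W i) (ρ ((i:ℕ)+1)) := by
    intro i
    rw [← mem_sepF, hedge i]
    exact Finset.mem_singleton_self _
  set x : X.V := ρ (n + R) with hx
  -- the hyperplanes beyond the cube
  have hcard1 : ∀ t : ℕ, ∃ h : X.H, X.sepF (ρ t) (ρ (t+1)) = {h} := by
    intro t
    apply Finset.card_eq_one.mp
    rw [← dist_eq_card, hray t (t+1) (by omega)]
    omega
  set g : ℕ → X.H := fun j => (hcard1 (n+j)).choose with hg
  have hgsep : ∀ j, X.sepF (ρ (n+j)) (ρ (n+j+1)) = {g j} := fun j => (hcard1 (n+j)).choose_spec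
  have hgflip : ∀ j, X.side (g j) (ρ (n+j)) ≠ X.side (g j) (ρ (n+j+1)) := by
    intro j
    rw [← mem_sepF, hgsep j]
    exact Finset.mem_singleton_self _
  have hgnotW : ∀ j, g j ∉ Set.range W := by
    rintro j ⟨i, hi⟩
    have h1 : (i:ℕ) = n + j := by
      apply ray_flip_unique hray (mem_sepF.2 (hWflip i)) (mem_sepF.2 ?_)
      rw [hi]
      exact hgflip j
    have := i.isLt
    omega
  refine ⟨x, ?_, ?_⟩
  · -- x is in the chosen halfspaces
    intro i
    have h1 : X.side (W i) (ρ ((i:ℕ)+1)) = X.side (W i) x := by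
      rw [hx]
      refine const_of_no_flip (by omega) ?_
      intro t ht1 _
      exact ray_no_flip hray (hWflip i) t (by omega)
    have h2 : X.side (W i) (ρ ((i:ℕ)+1)) = χ i := by
      rw [hρc _ (by omega), hcdef]
      show X.side (W i) (X.corner W hmax hinj hcross (χc ((i:ℕ)+1))) = χ i
      rw [X.corner_side W hmax hinj hcross, X.corient_W W hmax hinj]
      rw [hχc]
      simp only []
      rw [if_pos (by omega : (i:ℕ) < (i:ℕ)+1)]
    rw [← h1, h2]
  · -- x is far from the intersection of the carriers
    intro y hy
    have hymem : ∀ j, g j ∈ X.sepF x y → True := fun _ _ => trivial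
    have hgsepxy : ∀ j, j < R → g j ∈ X.sepF x y := by
      intro j hj
      rw [mem_sepF]
      have hyg : X.side (g j) y = X.cB W hmax (g j) := X.carrier_agree W hmax hy (hgnotW j)
      have hcn : X.side (g j) (ρ n) = X.cB W hmax (g j) := by
        rw [hρc n le_rfl, hcdef]
        show X.side (g j) (X.corner W hmax hinj hcross (χc n)) = X.cB W hmax (g j)
        rw [X.corner_side W hmax hinj hcross, X.corient_not W hmax _ (hgnotW j)]
      have h1 : X.side (g j) (ρ n) = X.side (g j) (ρ (n+j)) := by
        refine const_of_no_flip (by omega) ?_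
        intro t ht1 ht2
        exact ray_no_flip hray (hgflip j) t (by omega)
      have h2 : X.side (g j) (ρ (n+j+1)) = X.side (g j) x := by
        rw [hx]
        refine const_of_no_flip (by omega) ?_
        intro t ht1 ht2
        exact ray_no_flip hray (hgflip j) t (by omega)
      rw [← h2, hyg, ← hcn, h1]
      exact fun he => hgflip j he.symm
    have hginj : Set.InjOn g ↑(Finset.range R) := by
      intro j _ j' _ hjj
      have h1 : n + j = n + j' := by
        apply ray_flip_unique hray (mem_sepF.2 (hgflip j)) (mem_sepF.2 ?_)
        rw [hjj]
        exact hgflip j'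
      omega
    calc R = ((Finset.range R).image g).card := by
            rw [Finset.card_image_of_injOn hginj, Finset.card_range]
      _ ≤ (X.sepF x y).card := by
            apply Finset.card_le_card
            intro h hh
            obtain ⟨j, hj, rfl⟩ := Finset.mem_image.1 hh
            exact hgsepxy j (Finset.mem_range.1 hj)
      _ = X.dist x y := (dist_eq_card x y).symm

end CCC

/-- Lemma 4.23.  A CAT(0) cube complex with at least one hyperplane and no
infinite family of pairwise-crossing hyperplanes is combinatorially
geodesically complete iff every combinatorial geodesic segment and every
combinatorial geodesic ray extends to a bi-infinite combinatorial geodesic. -/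
theorem comb_geodesically_complete_iff (X : CCC) (hne : Nonempty X.H)
    (hX : X.NoInfiniteCrossing) :
    X.CombGeodComplete ↔
      ((∀ (c : ℕ → X.V) (n : ℕ), X.IsGeodSeg c n →
          ∃ (α : ℤ → X.V) (k : ℤ), X.IsGeodesicLine α ∧
            ∀ i : ℕ, i ≤ n → α (k + (i : ℤ)) = c i) ∧
        (∀ γ : ℕ → X.V, X.IsGeodesicRay γ →
          ∃ (α : ℤ → X.V) (k : ℤ), X.IsGeodesicLine α ∧
            ∀ i : ℕ, α (k + (i : ℤ)) = γ i)) := by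
  constructor
  · intro hGC
    constructor
    · intro c n hc
      obtain ⟨ρ, hρ, hρc⟩ := CCC.seg_to_ray hGC hne hX hc
      obtain ⟨α, hα, hαρ⟩ := CCC.ray_to_line hGC hne hX hρ
      refine ⟨α, 0, hα, ?_⟩
      intro i hi
      rw [zero_add, hαρ i, hρc i hi]
    · intro γ hγ
      obtain ⟨α, hα, hαρ⟩ := CCC.ray_to_line hGC hne hX hγ
      exact ⟨α, 0, hα, fun i => by rw [zero_add, hαρ i]⟩
  · intro hrhs
    exact CCC.converse_direction hne hrhs.1
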